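/- Let q > 3 be a prime power and let m ≥ 2. The minimum distance of the toric code associated with the order polytope of the m-th shrub S_m is d(C_{O_{S_m}}) = (q−1)(q−2)^{m−1}. -/

import Mathlib

open Finset

/-- A subset `W` of `α` is an upper order ideal with respect to the order relation `le`
if it is upward closed. -/
def IsUpperIdeal {α : Type*} (le : α → α → Prop) (W : Set α) : Prop :=
  ∀ ⦃x⦄, x ∈ W → ∀ ⦃y⦄, le x y → y ∈ W

/-- The space `L_P` of sections: the `F`-span of the monomials `∏_{i ∈ W} x_i`,
where `W` ranges over the upper order ideals of the poset `(α, le)`. -/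
def monomialSpan (α : Type*) [Fintype α] (le : α → α → Prop)
    (F : Type*) [Field F] : Submodule F ((α → Fˣ) → F) :=
  Submodule.span F {g : (α → Fˣ) → F |
    ∃ W : Finset α, (∀ x ∈ W, ∀ y, le x y → y ∈ W) ∧
      g = fun x => ∏ i ∈ W, (x i : F)}

/-- The minimum distance of the toric code of the order polytope of the poset `(α, le)`
over the finite field `F`:  `(q-1)^m - max { Z(f) : f ∈ L_P, f ≠ 0 }`. -/
noncomputable def toricMinDist (α : Type*) [Fintype α] (le : α → α → Prop)
    (F : Type*) [Field F] [Fintype F] : ℕ :=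
  (Fintype.card F - 1) ^ Fintype.card α -
    sSup {n : ℕ | ∃ g ∈ monomialSpan α le F, g ≠ 0 ∧
      n = Nat.card {x : α → Fˣ // g x = 0}}

/-- The order relation of the `m`-th shrub `S_m` on `Fin m`: the element `ε_1` (index `0`)
is below every other element, and the elements `ε_2, …, ε_m` are pairwise incomparable. -/
def shrubLE (m : ℕ) : Fin m → Fin m → Prop :=
  fun a b => a = b ∨ a.val = 0


section Aux
open Function

namespace Stmt17Aux

open scoped Classical

variable {ι : Type*} [Fintype ι] [DecidableEq ι] {F : Type*} [Field F] [Fintype F]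

def mono (F : Type*) [Field F] {ι : Type*} (S : Finset ι) : (ι → Fˣ) → F :=
  fun x => ∏ i ∈ S, (x i : F)

def V (F : Type*) [Field F] {ι : Type*} (T : Finset ι) : Submodule F ((ι → Fˣ) → F) :=
  Submodule.span F {g | ∃ S : Finset ι, S ⊆ T ∧ g = mono F S}

omit [Fintype ι] [DecidableEq ι] [Fintype F] in
lemma V_invariant {T : Finset ι} {g : (ι → Fˣ) → F} (hg : g ∈ V F T)
    {x y : ι → Fˣ} (hxy : ∀ i ∈ T, x i = y i) : g x = g y := by
  induction hg using Submodule.span_induction with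
  | mem g hg =>
      obtain ⟨S, hS, rfl⟩ := hg
      exact Finset.prod_congr rfl fun i hi => by rw [hxy i (hS hi)]
  | zero => rfl
  | add f g _ _ hf hg => simp [hf, hg]
  | smul c f _ hf => simp [hf]

def mulVar (F : Type*) [Field F] {ι : Type*} (a : ι) :
    ((ι → Fˣ) → F) →ₗ[F] ((ι → Fˣ) → F) where
  toFun h := fun x => (x a : F) * h x
  map_add' h₁ h₂ := by funext x; simp [mul_add]
  map_smul' c h := by funext x; simp [mul_comm, mul_left_comm]

omit [Fintype ι] [Fintype F] in
lemma V_insert_le {a : ι} {T : Finset ι} (ha : a ∉ T) :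
    V F (insert a T) ≤ V F T ⊔ (V F T).map (mulVar F a) := by
  rw [V, Submodule.span_le]
  rintro g ⟨S, hS, rfl⟩
  by_cases haS : a ∈ S
  · refine Submodule.mem_sup_right (Submodule.mem_map.2 ⟨mono F (S.erase a), ?_, ?_⟩)
    · refine Submodule.subset_span ⟨S.erase a, ?_, rfl⟩
      intro i hi
      rcases Finset.mem_erase.1 hi with ⟨hia, hiS⟩
      rcases Finset.mem_insert.1 (hS hiS) with h | h
      · exact absurd h hia
      · exact h
    · funext x
      exact Finset.mul_prod_erase S (fun i => (x i : F)) haS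
  · refine Submodule.mem_sup_left (Submodule.subset_span ⟨S, ?_, rfl⟩)
    intro i hi
    rcases Finset.mem_insert.1 (hS hi) with h | h
    · exact absurd (h ▸ hi) haS
    · exact h

lemma linear_fiber (u v : F) (hv : v ≠ 0) :
    Fintype.card Fˣ - 1 ≤ #(univ.filter fun t : Fˣ => u + (t : F) * v ≠ 0) := by
  have h1 : #(univ.filter fun t : Fˣ => u + (t : F) * v = 0) ≤ 1 := by
    refine Finset.card_le_one.2 fun t₁ h₁ t₂ h₂ => ?_
    have e₁ := (Finset.mem_filter.1 h₁).2
    have e₂ := (Finset.mem_filter.1 h₂).2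
    have : (t₁ : F) * v = (t₂ : F) * v := by linear_combination e₁ - e₂
    exact Units.ext (mul_right_cancel₀ hv this)
  have h2 := Finset.card_filter_add_card_filter_not
    (s := (univ : Finset Fˣ)) (p := fun t : Fˣ => u + (t : F) * v = 0)
  simp only [Finset.card_univ] at h2
  simp only [ne_eq, Finset.filter_congr_decidable] at h2 ⊢
  omega

lemma fiber_bound (a : ι) (g : (ι → Fˣ) → F) (A : Finset (ι → Fˣ))
    (hfib : ∀ x ∈ A, Fintype.card Fˣ - 1 ≤
      #(univ.filter fun t : Fˣ => g (update x a t) ≠ 0)) :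
    (Fintype.card Fˣ - 1) * #A ≤
      Fintype.card Fˣ * #(univ.filter fun x => g x ≠ 0) := by
  set P : Finset ((ι → Fˣ) × Fˣ) :=
    (A ×ˢ (univ : Finset Fˣ)).filter (fun p => g (update p.1 a p.2) ≠ 0) with hP
  have step1 : (Fintype.card Fˣ - 1) * #A ≤ #P := by
    have hcard : #P = ∑ x ∈ A, #(univ.filter fun t : Fˣ => g (update x a t) ≠ 0) := by
      rw [hP, Finset.card_filter, Finset.sum_product]
      simp [Finset.card_filter]
    rw [hcard, mul_comm]
    have := Finset.card_nsmul_le_sum A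
      (fun x => #(univ.filter fun t : Fˣ => g (update x a t) ≠ 0))
      (Fintype.card Fˣ - 1) hfib
    simpa [smul_eq_mul] using this
  have step2 : #P ≤ #(univ.filter fun x => g x ≠ 0) * Fintype.card Fˣ := by
    have := Finset.card_le_card_of_injOn
      (f := fun p : (ι → Fˣ) × Fˣ => (update p.1 a p.2, p.1 a))
      (s := P) (t := (univ.filter fun x => g x ≠ 0) ×ˢ (univ : Finset Fˣ))
      (fun p hp => by
        rcases Finset.mem_filter.1 hp with ⟨_, hg⟩
        exact Finset.mem_product.2 ⟨Finset.mem_filter.2 ⟨Finset.mem_univ _, hg⟩,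
          Finset.mem_univ _⟩)
      (by
        rintro ⟨x₁, t₁⟩ h₁ ⟨x₂, t₂⟩ h₂ h
        have h1 : update x₁ a t₁ = update x₂ a t₂ := congrArg Prod.fst h
        have h2 : x₁ a = x₂ a := congrArg Prod.snd h
        have ht : t₁ = t₂ := by
          have := congrFun h1 a
          simpa using this
        have hx : x₁ = x₂ := by
          funext i
          by_cases hia : i = a
          · subst hia; exact h2
          · have := congrFun h1 i
            simpa [Function.update_of_ne hia] using this
        simp [hx, ht])
    simpa [Finset.card_product, Finset.card_univ] using this
  calc (Fintype.card Fˣ - 1) * #A ≤ #P := step1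
    _ ≤ #(univ.filter fun x => g x ≠ 0) * Fintype.card Fˣ := step2
    _ = Fintype.card Fˣ * #(univ.filter fun x => g x ≠ 0) := mul_comm _ _

lemma count_ge (T : Finset ι) :
    ∀ g ∈ V F T, g ≠ 0 →
      (Fintype.card Fˣ - 1) ^ #T * Fintype.card Fˣ ^ (Fintype.card ι - #T) ≤
        #(univ.filter fun x : ι → Fˣ => g x ≠ 0) := by
  classical
  induction T using Finset.induction_on with
  | empty =>
      intro g hg hg0
      have hset : {g : (ι → Fˣ) → F | ∃ S : Finset ι, S ⊆ (∅ : Finset ι) ∧ g = mono F S}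
          = {fun _ => (1 : F)} := by
        ext h
        constructor
        · rintro ⟨S, hS, rfl⟩
          have : S = ∅ := Finset.subset_empty.1 hS
          subst this
          funext x
          simp [mono]
        · rintro rfl
          exact ⟨∅, Finset.Subset.refl _, by funext x; simp [mono]⟩
      rw [V, hset] at hg
      obtain ⟨c, rfl⟩ := Submodule.mem_span_singleton.1 hg
      have hc : c ≠ 0 := by
        intro h; apply hg0; simp [h]
      have : (univ.filter fun x : ι → Fˣ => (c • fun _ => (1:F)) x ≠ 0) = univ := by
        refine Finset.filter_true_of_mem fun x _ => ?_
        simp [hc]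
      rw [this]
      simp [Finset.card_univ, Fintype.card_fun]
  | insert _ _ ha _ =>
      rename_i a T ih
      intro g hg hg0
      obtain ⟨g₀, hg₀, h, hh, rfl⟩ := Submodule.mem_sup.1 (V_insert_le ha hg)
      obtain ⟨g₁, hg₁, rfl⟩ := Submodule.mem_map.1 hh
      have hkm : #T + 1 ≤ Fintype.card ι := by
        have := Finset.card_le_univ (insert a T)
        rwa [Finset.card_insert_of_notMem ha] at this
      have hQpos : 0 < Fintype.card Fˣ := Fintype.card_pos
      rw [Finset.card_insert_of_notMem ha]
      by_cases hg1 : g₁ = 0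
      · subst hg1
        rw [map_zero, add_zero] at hg0 ⊢
        have hIH := ih g₀ hg₀ hg0
        refine le_trans ?_ hIH
        have e : Fintype.card ι - #T = (Fintype.card ι - (#T + 1)) + 1 := by omega
        calc (Fintype.card Fˣ - 1) ^ (#T + 1) * Fintype.card Fˣ ^ (Fintype.card ι - (#T + 1))
            = (Fintype.card Fˣ - 1) ^ #T * Fintype.card Fˣ ^ (Fintype.card ι - (#T + 1))
                * (Fintype.card Fˣ - 1) := by ring
          _ ≤ (Fintype.card Fˣ - 1) ^ #T * Fintype.card Fˣ ^ (Fintype.card ι - (#T + 1))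
                * Fintype.card Fˣ := by gcongr; omega
          _ = (Fintype.card Fˣ - 1) ^ #T * Fintype.card Fˣ ^ (Fintype.card ι - #T) := by
                rw [e]; ring
      · have hIH := ih g₁ hg₁ hg1
        set A := univ.filter fun x : ι → Fˣ => g₁ x ≠ 0 with hA
        have hfib : ∀ x ∈ A, Fintype.card Fˣ - 1 ≤
            #(univ.filter fun t : Fˣ => (g₀ + mulVar F a g₁) (update x a t) ≠ 0) := by
          intro x hx
          have hval : ∀ t : Fˣ, (g₀ + mulVar F a g₁) (update x a t)
              = g₀ x + (t : F) * g₁ x := by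
            intro t
            have e₀ : g₀ (update x a t) = g₀ x :=
              V_invariant hg₀ fun i hi => Function.update_of_ne (by rintro rfl; exact ha hi) _ _
            have e₁ : g₁ (update x a t) = g₁ x :=
              V_invariant hg₁ fun i hi => Function.update_of_ne (by rintro rfl; exact ha hi) _ _
            simp [mulVar, e₀, e₁]
          have := linear_fiber (g₀ x) (g₁ x) ((Finset.mem_filter.1 hx).2)
          refine le_trans this (le_of_eq ?_)
          congr 1
          apply Finset.filter_congr
          intro t _
          simp [hval t]
        have hfb := fiber_bound a (g₀ + mulVar F a g₁) A hfib
        have key : Fintype.card Fˣ *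
            ((Fintype.card Fˣ - 1) ^ (#T + 1) * Fintype.card Fˣ ^ (Fintype.card ι - (#T + 1)))
            ≤ Fintype.card Fˣ *
              #(univ.filter fun x : ι → Fˣ => (g₀ + mulVar F a g₁) x ≠ 0) := by
          calc Fintype.card Fˣ *
              ((Fintype.card Fˣ - 1) ^ (#T + 1) * Fintype.card Fˣ ^ (Fintype.card ι - (#T + 1)))
              = (Fintype.card Fˣ - 1) *
                ((Fintype.card Fˣ - 1) ^ #T * Fintype.card Fˣ ^ (Fintype.card ι - #T)) := by
                  have e : Fintype.card ι - #T = (Fintype.card ι - (#T + 1)) + 1 := by omega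
                  rw [e]; ring
            _ ≤ (Fintype.card Fˣ - 1) * #A := by
                  exact Nat.mul_le_mul_left _ hIH
            _ ≤ Fintype.card Fˣ *
                #(univ.filter fun x : ι → Fˣ => (g₀ + mulVar F a g₁) x ≠ 0) := hfb
        exact Nat.le_of_mul_le_mul_left key hQpos


end Stmt17Aux

namespace Stmt17Aux

variable {F : Type} [Field F] [Fintype F]

/-- decomposition of the shrub monomial span -/
lemma shrub_span_le (k : ℕ) :
    monomialSpan (Fin (k+2)) (shrubLE (k+2)) F ≤
      V F ((univ : Finset (Fin (k+2))).erase 0) ⊔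
        Submodule.span F {mulVar F (0 : Fin (k+2)) (mono F (univ.erase 0))} := by
  rw [monomialSpan, Submodule.span_le]
  rintro g ⟨W, hW, rfl⟩
  by_cases h0 : (0 : Fin (k+2)) ∈ W
  · have hWuniv : W = univ := Finset.eq_univ_of_forall fun y => hW 0 h0 y (Or.inr rfl)
    subst hWuniv
    have hgeq : (fun x : Fin (k+2) → Fˣ => ∏ i ∈ univ, (x i : F))
        = mulVar F (0 : Fin (k+2)) (mono F (univ.erase 0)) := by
      funext x
      exact (Finset.mul_prod_erase univ (fun i => (x i : F)) (Finset.mem_univ 0)).symm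
    rw [hgeq]
    exact SetLike.mem_coe.2 (Submodule.mem_sup_right (Submodule.mem_span_singleton_self _))
  · refine SetLike.mem_coe.2 (Submodule.mem_sup_left (Submodule.subset_span ⟨W, ?_, rfl⟩))
    intro i hi
    exact Finset.mem_erase.2 ⟨fun h => h0 (h ▸ hi), Finset.mem_univ i⟩


open scoped Classical in
/-- lower bound on the number of nonvanishing points for the shrub span -/
lemma shrub_count (k : ℕ) (g : (Fin (k+2) → Fˣ) → F)
    (hg : g ∈ monomialSpan (Fin (k+2)) (shrubLE (k+2)) F) (hg0 : g ≠ 0) :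
    (Fintype.card Fˣ - 1) ^ (k+1) * Fintype.card Fˣ ≤
      #(univ.filter fun x : Fin (k+2) → Fˣ => g x ≠ 0) := by
  classical
  set T₀ : Finset (Fin (k+2)) := univ.erase 0 with hT₀
  have hT₀card : #T₀ = k + 1 := by
    rw [hT₀, Finset.card_erase_of_mem (Finset.mem_univ _), Finset.card_univ]
    simp
  have h0T₀ : (0 : Fin (k+2)) ∉ T₀ := Finset.notMem_erase _ _
  obtain ⟨g₀, hg₀, h, hh, rfl⟩ := Submodule.mem_sup.1 (shrub_span_le k hg)
  obtain ⟨c, rfl⟩ := Submodule.mem_span_singleton.1 hh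
  have hQpos : 0 < Fintype.card Fˣ := Fintype.card_pos
  by_cases hc : c = 0
  · subst hc
    rw [zero_smul, add_zero] at hg0 ⊢
    have := count_ge T₀ g₀ hg₀ hg0
    rw [hT₀card] at this
    have e : Fintype.card (Fin (k+2)) - (k+1) = 1 := by simp
    rw [e, pow_one] at this
    exact this
  · -- fiber bound with A = univ
    set g := g₀ + c • mulVar F (0 : Fin (k+2)) (mono F T₀) with hgdef
    have hfib : ∀ x ∈ (univ : Finset (Fin (k+2) → Fˣ)), Fintype.card Fˣ - 1 ≤
        #(univ.filter fun t : Fˣ => g (update x 0 t) ≠ 0) := by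
      intro x _
      have hval : ∀ t : Fˣ, g (update x 0 t) = g₀ x + (t : F) * (c * mono F T₀ x) := by
        intro t
        have e₀ : g₀ (update x 0 t) = g₀ x :=
          V_invariant hg₀ fun i hi =>
            Function.update_of_ne (Finset.mem_erase.1 hi).1 _ _
        have e₁ : mono F T₀ (update x 0 t) = mono F T₀ x := by
          refine Finset.prod_congr rfl fun i hi => ?_
          rw [Function.update_of_ne (Finset.mem_erase.1 hi).1]
        simp only [hgdef, Pi.add_apply, Pi.smul_apply, smul_eq_mul, mulVar,
          LinearMap.coe_mk, AddHom.coe_mk, e₀, e₁, Function.update_self]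
        ring
      have hv : c * mono F T₀ x ≠ 0 :=
        mul_ne_zero hc (Finset.prod_ne_zero_iff.2 fun i _ => Units.ne_zero _)
      have := linear_fiber (g₀ x) (c * mono F T₀ x) hv
      refine le_trans this (le_of_eq ?_)
      congr 1
      apply Finset.filter_congr
      intro t _
      simp [hval t]
    have hfb := fiber_bound (0 : Fin (k+2)) g univ hfib
    rw [Finset.card_univ, Fintype.card_fun, Fintype.card_fin] at hfb
    have key : Fintype.card Fˣ * ((Fintype.card Fˣ - 1) ^ (k+1) * Fintype.card Fˣ)
        ≤ Fintype.card Fˣ * #(univ.filter fun x : Fin (k+2) → Fˣ => g x ≠ 0) := by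
      calc Fintype.card Fˣ * ((Fintype.card Fˣ - 1) ^ (k+1) * Fintype.card Fˣ)
          = (Fintype.card Fˣ - 1) * ((Fintype.card Fˣ - 1) ^ k * Fintype.card Fˣ ^ 2) := by
            ring
        _ ≤ (Fintype.card Fˣ - 1) * (Fintype.card Fˣ ^ k * Fintype.card Fˣ ^ 2) := by
            gcongr
            exact Nat.sub_le _ _
        _ = (Fintype.card Fˣ - 1) * Fintype.card Fˣ ^ (k + 2) := by ring
        _ ≤ Fintype.card Fˣ * #(univ.filter fun x : Fin (k+2) → Fˣ => g x ≠ 0) := hfb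
    exact Nat.le_of_mul_le_mul_left key hQpos

lemma witness_mem (k : ℕ) :
    (fun x : Fin (k+2) → Fˣ => ∏ i ∈ univ.erase 0, ((x i : F) - 1)) ∈
      monomialSpan (Fin (k+2)) (shrubLE (k+2)) F := by
  classical
  set T₀ : Finset (Fin (k+2)) := univ.erase 0 with hT₀
  have hideal : ∀ S : Finset (Fin (k+2)), S ⊆ T₀ →
      (∀ x ∈ S, ∀ y, shrubLE (k+2) x y → y ∈ S) := by
    intro S hS x hx y hxy
    rcases hxy with h | h
    · exact h ▸ hx
    · have hx0 : x = 0 := Fin.ext h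
      exact absurd hx0 (Finset.mem_erase.1 (hS hx)).1
  have expand : (fun x : Fin (k+2) → Fˣ => ∏ i ∈ T₀, ((x i : F) - 1))
      = ∑ S ∈ T₀.powerset, ((-1 : F) ^ #(T₀ \ S)) • mono F S := by
    funext x
    rw [Finset.sum_apply]
    calc ∏ i ∈ T₀, ((x i : F) - 1) = ∏ i ∈ T₀, ((x i : F) + (-1)) := by
          exact Finset.prod_congr rfl fun i _ => by ring
      _ = ∑ S ∈ T₀.powerset, (∏ i ∈ S, (x i : F)) * ∏ _i ∈ T₀ \ S, (-1 : F) :=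
          Finset.prod_add _ _ _
      _ = ∑ S ∈ T₀.powerset, (((-1 : F) ^ #(T₀ \ S)) • mono F S) x := by
          refine Finset.sum_congr rfl fun S _ => ?_
          simp [mono, Finset.prod_const, mul_comm]
  rw [expand]
  refine Submodule.sum_mem _ fun S hS => Submodule.smul_mem _ _ ?_
  exact Submodule.subset_span ⟨S, hideal S (Finset.mem_powerset.1 hS), rfl⟩

open scoped Classical in
lemma witness_count (k : ℕ) :
    #(univ.filter fun x : Fin (k+2) → Fˣ =>
        (∏ i ∈ univ.erase 0, ((x i : F) - 1)) ≠ 0) =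
      Fintype.card Fˣ * (Fintype.card Fˣ - 1) ^ (k+1) := by
  classical
  set t : Fin (k+2) → Finset Fˣ :=
    fun i => if i = 0 then univ else univ.filter fun u : Fˣ => (u : F) ≠ 1 with ht
  have hset : (univ.filter fun x : Fin (k+2) → Fˣ =>
      (∏ i ∈ univ.erase 0, ((x i : F) - 1)) ≠ 0) = Fintype.piFinset t := by
    ext x
    simp only [Finset.mem_filter, Finset.mem_univ, true_and, Fintype.mem_piFinset]
    rw [Finset.prod_ne_zero_iff]
    constructor
    · intro h i
      by_cases hi : i = 0
      · simp [ht, hi]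
      · have := h i (Finset.mem_erase.2 ⟨hi, Finset.mem_univ _⟩)
        simp only [ht, hi, if_false, Finset.mem_filter, Finset.mem_univ, true_and]
        intro he
        exact this (by rw [he]; ring)
    · intro h i hi
      have hi0 : i ≠ 0 := (Finset.mem_erase.1 hi).1
      have := h i
      simp only [ht, hi0, if_false, Finset.mem_filter, Finset.mem_univ, true_and] at this
      exact sub_ne_zero.2 this
  rw [hset, Fintype.card_piFinset,
    ← Finset.mul_prod_erase univ (fun i => #(t i)) (Finset.mem_univ (0 : Fin (k+2)))]
  have h0 : #(t 0) = Fintype.card Fˣ := by simp [ht]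
  have hone : (univ.filter fun u : Fˣ => (u : F) = 1) = {1} := by
    ext u
    simp [Units.val_eq_one]
  have hi : ∀ i ∈ (univ : Finset (Fin (k+2))).erase 0, #(t i) = Fintype.card Fˣ - 1 := by
    intro i hi
    have hi0 : i ≠ 0 := (Finset.mem_erase.1 hi).1
    have hsum := Finset.card_filter_add_card_filter_not
      (s := (univ : Finset Fˣ)) (p := fun u : Fˣ => (u : F) = 1)
    rw [hone] at hsum
    simp only [Finset.card_singleton, Finset.card_univ] at hsum
    simp only [ht, hi0, if_false]
    simp only [ne_eq, Finset.filter_congr_decidable]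
    omega
  rw [h0, Finset.prod_congr rfl hi, Finset.prod_const,
    Finset.card_erase_of_mem (Finset.mem_univ _), Finset.card_univ]
  simp
end Stmt17Aux

end Aux

open Stmt17Aux

/-- Let `q > 3` be a prime power (realized as the cardinality of a finite
field `F`) and let `m ≥ 2`.  The minimum distance of the toric code of the order polytope of
the `m`-th shrub `S_m` is `(q-1) * (q-2)^(m-1)`. -/
theorem stmt17 (q m : ℕ) (hq : 3 < q) (hm : 2 ≤ m)
    (F : Type) [Field F] [Fintype F] (hF : Fintype.card F = q) :
    toricMinDist (Fin m) (shrubLE m) F = (q - 1) * (q - 2) ^ (m - 1) := by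
  classical
  obtain ⟨k, rfl⟩ : ∃ k, m = k + 2 := ⟨m - 2, by omega⟩
  have hQ : Fintype.card Fˣ = q - 1 := by rw [Fintype.card_units, hF]
  have hQ3 : 3 ≤ Fintype.card Fˣ := by omega
  have htotal : Fintype.card (Fin (k+2) → Fˣ) = Fintype.card Fˣ ^ (k+2) := by
    rw [Fintype.card_fun, Fintype.card_fin]
  set N₀ := Fintype.card Fˣ * (Fintype.card Fˣ - 1) ^ (k+1) with hN₀
  set Z₀ := Fintype.card Fˣ ^ (k+2) - N₀ with hZ₀
  have hN₀le : N₀ ≤ Fintype.card Fˣ ^ (k+2) := by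
    calc N₀ ≤ Fintype.card Fˣ * Fintype.card Fˣ ^ (k+1) :=
          Nat.mul_le_mul_left _ (Nat.pow_le_pow_left (Nat.sub_le _ _) _)
      _ = Fintype.card Fˣ ^ (k+2) := by ring
  have hcard : ∀ g : (Fin (k+2) → Fˣ) → F,
      Nat.card {x : Fin (k+2) → Fˣ // g x = 0} = #(univ.filter fun x => g x = 0) := by
    intro g
    rw [Nat.card_eq_fintype_card, Fintype.card_subtype]
  have hsplit : ∀ g : (Fin (k+2) → Fˣ) → F,
      #(univ.filter fun x => g x = 0) =
        Fintype.card Fˣ ^ (k+2) - #(univ.filter fun x => g x ≠ 0) := by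
    intro g
    have h := Finset.card_filter_add_card_filter_not
      (s := (univ : Finset (Fin (k+2) → Fˣ))) (p := fun x => g x = 0)
    rw [Finset.card_univ, htotal] at h
    simp only [ne_eq, Finset.filter_congr_decidable] at h ⊢
    omega
  have hub : ∀ n ∈ {n : ℕ | ∃ g ∈ monomialSpan (Fin (k+2)) (shrubLE (k+2)) F, g ≠ 0 ∧
      n = Nat.card {x : Fin (k+2) → Fˣ // g x = 0}}, n ≤ Z₀ := by
    rintro n ⟨g, hg, hg0, rfl⟩
    rw [hcard g, hsplit g, hZ₀]
    refine Nat.sub_le_sub_left ?_ _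
    have h := shrub_count k g hg hg0
    rw [hN₀, mul_comm]
    exact h
  set w := fun x : Fin (k+2) → Fˣ => ∏ i ∈ univ.erase 0, ((x i : F) - 1) with hw
  have hwcount : #(univ.filter fun x => w x ≠ 0) = N₀ := by
    rw [hw]; exact witness_count k
  have hwne : w ≠ 0 := by
    have hpos : 0 < #(univ.filter fun x => w x ≠ 0) := by
      rw [hwcount, hN₀]
      exact Nat.mul_pos (by omega) (pow_pos (by omega) _)
    obtain ⟨x, hx⟩ := Finset.card_pos.1 hpos
    intro h
    exact (Finset.mem_filter.1 hx).2 (by rw [h]; rfl)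
  have hmem : Z₀ ∈ {n : ℕ | ∃ g ∈ monomialSpan (Fin (k+2)) (shrubLE (k+2)) F, g ≠ 0 ∧
      n = Nat.card {x : Fin (k+2) → Fˣ // g x = 0}} := by
    refine ⟨w, ?_, hwne, ?_⟩
    · rw [hw]; exact witness_mem k
    · rw [hcard w, hsplit w, hwcount]
  have hsup : sSup {n : ℕ | ∃ g ∈ monomialSpan (Fin (k+2)) (shrubLE (k+2)) F, g ≠ 0 ∧
      n = Nat.card {x : Fin (k+2) → Fˣ // g x = 0}} = Z₀ :=
    le_antisymm (csSup_le ⟨Z₀, hmem⟩ hub) (le_csSup ⟨Z₀, hub⟩ hmem)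
  rw [toricMinDist, hsup, hF, Fintype.card_fin]
  have hq1 : q - 1 = Fintype.card Fˣ := hQ.symm
  have hq2 : q - 2 = Fintype.card Fˣ - 1 := by rw [hQ, Nat.sub_sub]
  rw [hq1, hq2, hZ₀, Nat.sub_sub_self hN₀le, hN₀]
  norm_num
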